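/- Let M ∈ ℂ with M ≠ 0 and y ∈ ℂ, set P = [[M, 1], [0, M⁻¹]], Q = [[M, 0], [2−y, M⁻¹]], and x = M + M⁻¹. Let W = (QP⁻¹)^m (Q⁻¹P)^m for an integer m. Then W₁₁ + (M⁻¹ − M)·W₁₂ = 1 − (y+2−x²)·S_{m−1}(y)·(S_m(y) − (y−1)S_{m−1}(y)), where W₁₁ and W₁₂ are the (1,1)- and (1,2)-entries of W. -/

import Mathlib

open Polynomial

/-- Integer-indexed Chebyshev-like polynomials: `S 0 = 1`, `S 1 = X`,
and `S (l+1) = X * S l - S (l-1)` for all `l : ℤ`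
(equivalently `S l = U_l (v/2)` for the Chebyshev polynomials `U` of the second kind). -/
@[semireducible] noncomputable def chebS (R : Type*) [CommRing R] : ℤ → R[X]
  | 0 => 1
  | 1 => X
  | (n : ℕ) + 2 => X * chebS R (n + 1) - chebS R n
  | -((n : ℕ) + 1) => X * chebS R (-n) - chebS R (-n + 1)
  termination_by n => Int.natAbs n + Int.natAbs (n - 1)



section lemmas
variable {R : Type*} [CommRing R]

lemma chebS_zero : chebS R 0 = 1 := by rw [chebS.eq_def]
lemma chebS_one : chebS R 1 = X := by rw [chebS.eq_def]
lemma chebS_negSucc (n : ℕ) : chebS R (Int.negSucc n) = X * chebS R (-n) - chebS R (-n+1) := by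
  rw [chebS.eq_def]
lemma chebS_add_two (n : ℕ) : chebS R ((n:ℤ) + 2) = X * chebS R ((n:ℤ)+1) - chebS R (n:ℤ) := by
  show chebS R (Int.ofNat (n+2)) = _
  rw [chebS.eq_def]

lemma chebS_neg_one : chebS R (-1) = 0 := by
  rw [show ((-1):ℤ) = Int.negSucc 0 from rfl, chebS_negSucc]
  norm_num [chebS_zero, chebS_one]

lemma chebS_neg_two : chebS R (-2) = -1 := by
  rw [show ((-2):ℤ) = Int.negSucc 1 from rfl, chebS_negSucc]
  norm_num [chebS_neg_one, chebS_zero]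

lemma chebS_rec (l : ℤ) : chebS R (l + 1) = X * chebS R l - chebS R (l - 1) := by
  rcases l with n | n
  · cases n with
    | zero =>
        show chebS R 1 = X * chebS R 0 - chebS R (0 - 1)
        norm_num [chebS_one, chebS_zero, chebS_neg_one]
    | succ k =>
        have h := chebS_add_two (R := R) k
        have e1 : (Int.ofNat (k+1)) + 1 = (k:ℤ) + 2 := by push_cast [Int.ofNat_eq_coe]; ring
        have e2 : (Int.ofNat (k+1) : ℤ) = (k:ℤ) + 1 := by simp
        rw [e1, e2, show (k:ℤ)+1-1 = (k:ℤ) by ring]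
        exact h
  · have en : Int.negSucc n = -(n:ℤ) - 1 := by rw [Int.negSucc_eq]; ring
    have h2 := chebS_negSucc (R := R) (n+1)
    have en2 : Int.negSucc (n+1) = -(n:ℤ) - 2 := by rw [Int.negSucc_eq]; push_cast; ring
    rw [en2] at h2
    push_cast at h2
    rw [show -((n:ℤ)+1)+1 = -(n:ℤ) by ring] at h2
    rw [show -((n:ℤ)+1) = -(n:ℤ)-1 by ring] at h2
    rw [en, show -(n:ℤ)-1+1 = -(n:ℤ) by ring, show -(n:ℤ)-1-1 = -(n:ℤ)-2 by ring, h2]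
    ring

end lemmas

section matrixpow
open Matrix

lemma chebS_pow_formula (y : ℂ) (A : Matrix (Fin 2) (Fin 2) ℂ)
    (hCH : A * A = y • A - 1) (m : ℤ) :
    A ^ m = (chebS ℂ (m-1)).eval y • A - (chebS ℂ (m-2)).eval y • 1 := by
  have hinv : A * (y • (1 : Matrix (Fin 2) (Fin 2) ℂ) - A) = 1 := by
    rw [Matrix.mul_sub, hCH, mul_smul_comm, mul_one]
    abel
  have hU : IsUnit A.det := Matrix.isUnit_det_of_right_inverse hinv
  have hAinv : A⁻¹ = y • (1 : Matrix (Fin 2) (Fin 2) ℂ) - A := Matrix.inv_eq_right_inv hinv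
  induction m using Int.induction_on with
  | zero =>
      rw [show (0:ℤ)-1 = -1 by norm_num, show (0:ℤ)-2 = -2 by norm_num]
      simp [chebS_neg_one, chebS_neg_two]
  | succ k ih =>
      rw [Matrix.zpow_add_one hU, ih]
      have hrec := congrArg (eval y) (chebS_rec (R := ℂ) ((k:ℤ) - 1))
      simp only [eval_sub, eval_mul, eval_X] at hrec
      rw [show (k:ℤ)-1+1 = (k:ℤ) by ring, show (k:ℤ)-1-1 = (k:ℤ)-2 by ring] at hrec
      rw [show (k:ℤ)+1-1 = (k:ℤ) by ring, show (k:ℤ)+1-2 = (k:ℤ)-1 by ring, hrec]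
      rw [sub_mul, smul_mul_assoc, smul_mul_assoc, hCH, one_mul]
      module
  | pred k ih =>
      rw [show -(k:ℤ) - 1 = -(k:ℤ) - 1 from rfl, Matrix.zpow_sub_one hU, ih, hAinv]
      have hrec := congrArg (eval y) (chebS_rec (R := ℂ) (-(k:ℤ) - 2))
      simp only [eval_sub, eval_mul, eval_X] at hrec
      rw [show -(k:ℤ)-2+1 = -(k:ℤ)-1 by ring, show -(k:ℤ)-2-1 = -(k:ℤ)-3 by ring] at hrec
      rw [show -(k:ℤ)-1-1 = -(k:ℤ)-2 by ring, show -(k:ℤ)-1-2 = -(k:ℤ)-3 by ring]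
      have hnew : (chebS ℂ (-(k:ℤ) - 3)).eval y
          = y * (chebS ℂ (-(k:ℤ) - 2)).eval y - (chebS ℂ (-(k:ℤ) - 1)).eval y := by
        linear_combination hrec
      rw [hnew]
      rw [sub_mul, smul_mul_assoc, smul_mul_assoc, Matrix.mul_sub, hCH,
        mul_smul_comm, mul_one, Matrix.one_mul]
      module

lemma chebS_norm (y : ℂ) (m : ℤ) :
    (chebS ℂ (m-1)).eval y ^ 2 - y * (chebS ℂ (m-1)).eval y * (chebS ℂ (m-2)).eval y
      + (chebS ℂ (m-2)).eval y ^ 2 = 1 := by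
  induction m using Int.induction_on with
  | zero =>
      rw [show (0:ℤ)-1 = -1 by norm_num, show (0:ℤ)-2 = -2 by norm_num]
      norm_num [chebS_neg_one, chebS_neg_two]
  | succ k ih =>
      have hrec := congrArg (eval y) (chebS_rec (R := ℂ) ((k:ℤ) - 1))
      simp only [eval_sub, eval_mul, eval_X] at hrec
      rw [show (k:ℤ)-1+1 = (k:ℤ) by ring, show (k:ℤ)-1-1 = (k:ℤ)-2 by ring] at hrec
      rw [show (k:ℤ)+1-1 = (k:ℤ) by ring, show (k:ℤ)+1-2 = (k:ℤ)-1 by ring]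
      set s := (chebS ℂ ((k:ℤ) - 1)).eval y
      set t := (chebS ℂ ((k:ℤ) - 2)).eval y
      set s' := (chebS ℂ (k:ℤ)).eval y
      linear_combination ih + (s' - t) * hrec
  | pred k ih =>
      have hrec := congrArg (eval y) (chebS_rec (R := ℂ) (-(k:ℤ) - 2))
      simp only [eval_sub, eval_mul, eval_X] at hrec
      rw [show -(k:ℤ)-2+1 = -(k:ℤ)-1 by ring, show -(k:ℤ)-2-1 = -(k:ℤ)-3 by ring] at hrec
      rw [show -(k:ℤ)-1-1 = -(k:ℤ)-2 by ring, show -(k:ℤ)-1-2 = -(k:ℤ)-3 by ring]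
      set s := (chebS ℂ (-(k:ℤ) - 1)).eval y
      set t := (chebS ℂ (-(k:ℤ) - 2)).eval y
      set t' := (chebS ℂ (-(k:ℤ) - 3)).eval y
      linear_combination ih + (t' - s) * hrec

end matrixpow

/-- For `W = (QP⁻¹)^m (Q⁻¹P)^m` with `P = [[M,1],[0,M⁻¹]]`, `Q = [[M,0],[2-y,M⁻¹]]` and
`x = M + M⁻¹`, one has `W₁₁ + (M⁻¹ - M)·W₁₂ = 1 - (y+2-x²)·S_{m-1}(y)·(S_m(y) - (y-1)S_{m-1}(y))`. -/
theorem even_word_Riley_factor (M y : ℂ) (hM : M ≠ 0) (m : ℤ)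
    (W : Matrix (Fin 2) (Fin 2) ℂ)
    (hW : W = (!![M, 0; 2 - y, M⁻¹] * (!![M, 1; 0, M⁻¹])⁻¹) ^ m
        * ((!![M, 0; 2 - y, M⁻¹])⁻¹ * !![M, 1; 0, M⁻¹]) ^ m) :
    W 0 0 + (M⁻¹ - M) * W 0 1
      = 1 - (y + 2 - (M + M⁻¹)^2) * (chebS ℂ (m - 1)).eval y
            * ((chebS ℂ m).eval y - (y - 1) * (chebS ℂ (m - 1)).eval y) := by
  have hMM : M * M⁻¹ = 1 := mul_inv_cancel₀ hM
  have hP : (!![M, 1; 0, M⁻¹])⁻¹ = !![M⁻¹, -1; 0, M] := by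
    apply Matrix.inv_eq_right_inv
    ext i j
    fin_cases i <;> fin_cases j <;>
      simp [Matrix.mul_apply, Fin.sum_univ_succ, Matrix.one_apply] <;> field_simp
  have hQ : (!![M, 0; 2 - y, M⁻¹])⁻¹ = !![M⁻¹, 0; y - 2, M] := by
    apply Matrix.inv_eq_right_inv
    ext i j
    fin_cases i <;> fin_cases j <;>
      (try simp [Matrix.mul_apply, Fin.sum_univ_succ, Matrix.one_apply]) <;>
      (try field_simp) <;> (try ring)
  set A : Matrix (Fin 2) (Fin 2) ℂ := !![1, -M; (2-y)*M⁻¹, y-1] with hA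
  set B : Matrix (Fin 2) (Fin 2) ℂ := !![1, M⁻¹; (y-2)*M, y-1] with hB
  have hQA : !![M, 0; 2 - y, M⁻¹] * !![M⁻¹, -1; 0, M] = A := by
    rw [hA]
    ext i j
    fin_cases i <;> fin_cases j <;>
      simp [Matrix.mul_apply, Fin.sum_univ_succ] <;> field_simp <;> ring
  have hQB : !![M⁻¹, 0; y - 2, M] * !![M, 1; 0, M⁻¹] = B := by
    rw [hB]
    ext i j
    fin_cases i <;> fin_cases j <;>
      simp [Matrix.mul_apply, Fin.sum_univ_succ] <;> field_simp <;> ring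
  have hCHA : A * A = y • A - 1 := by
    rw [hA]
    ext i j
    fin_cases i <;> fin_cases j <;>
      (try simp [Matrix.mul_apply, Fin.sum_univ_succ, Matrix.one_apply]) <;>
      (try field_simp) <;> (try ring)
  have hCHB : B * B = y • B - 1 := by
    rw [hB]
    ext i j
    fin_cases i <;> fin_cases j <;>
      (try simp [Matrix.mul_apply, Fin.sum_univ_succ, Matrix.one_apply]) <;>
      (try field_simp) <;> (try ring)
  rw [hP, hQ, hQA, hQB, chebS_pow_formula y A hCHA m, chebS_pow_formula y B hCHB m] at hW
  set s := (chebS ℂ (m-1)).eval y with hs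
  set t := (chebS ℂ (m-2)).eval y with ht
  have eA : (s • A - t • (1 : Matrix (Fin 2) (Fin 2) ℂ))
      = !![s - t, -(s*M); s*(2-y)*M⁻¹, s*(y-1) - t] := by
    rw [hA, Matrix.one_fin_two]
    ext i j
    fin_cases i <;> fin_cases j <;> (try simp) <;> (try ring)
  have eB : (s • B - t • (1 : Matrix (Fin 2) (Fin 2) ℂ))
      = !![s - t, s*M⁻¹; s*(y-2)*M, s*(y-1) - t] := by
    rw [hB, Matrix.one_fin_two]
    ext i j
    fin_cases i <;> fin_cases j <;> (try simp) <;> (try ring)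
  rw [eA, eB, Matrix.mul_fin_two] at hW
  have hSm : (chebS ℂ m).eval y = y * s - t := by
    have hrec := congrArg (eval y) (chebS_rec (R := ℂ) (m - 1))
    simp only [eval_sub, eval_mul, eval_X] at hrec
    rw [show m - 1 + 1 = m by ring, show m - 1 - 1 = m - 2 by ring] at hrec
    rw [hrec, hs, ht]
  have hnorm := chebS_norm y m
  rw [← hs, ← ht] at hnorm
  rw [hW, hSm]
  simp only [Matrix.of_apply, Matrix.cons_val', Matrix.cons_val_zero, Matrix.cons_val_one,
    Matrix.head_cons, Matrix.empty_val', Matrix.cons_val_fin_one, Matrix.head_fin_const]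
  field_simp
  linear_combination (M^2) * hnorm
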